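/- Let k ≥ 1 be an integer, u0 ≥ 0, γ ∈ (0,1], η ∈ (0,1], and set ε = 1 − γ². Then for every x ∈ [−1/2, 1/2]: η^{2u0} · 2^{2k} · γ^{2k} · f(1/2 + x, γ, η) = Σ_{j=0}^k C(k,j) · (2x)^j · ( ε^j·(2−ε)^{k−j} − (1−η) )². -/
import Mathlib


open Real Finset

noncomputable section

/-- `f(α,γ,η)` from eq. (7) of the paper. -/
def ff (k : ℕ) (u0 α γ η : ℝ) : ℝ :=
  η ^ (-(2*u0)) *
    ((α * ((γ^2 + (γ^2)⁻¹)/2) + 1 - α)^k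
      - 2*(1-η) * ((α * (γ^2)⁻¹ + (1-α))/2)^k
      + (1-η)^2 * (α * (γ^2)⁻¹/2)^k)

/-- Eq. (eq:binom) of the paper: with `ε = 1 − γ²`, for every `x ∈ [−1/2, 1/2]`,
`η^{2u₀} 2^{2k} γ^{2k} f(1/2+x, γ, η)
  = Σ_{j=0}^k C(k,j) (2x)^j (ε^j (2−ε)^{k−j} − (1−η))²`. -/
theorem f_binomial_identity (k : ℕ) (hk : 1 ≤ k) (u0 γ η : ℝ) (hu0 : 0 ≤ u0)
    (hγ0 : 0 < γ) (hγ1 : γ ≤ 1) (hη0 : 0 < η) (hη1 : η ≤ 1)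
    (x : ℝ) (hx1 : -(1/2) ≤ x) (hx2 : x ≤ 1/2) :
    η ^ (2*u0) * 2^(2*k) * γ^(2*k) * ff k u0 (1/2 + x) γ η =
      ∑ j ∈ Finset.range (k+1),
        (k.choose j : ℝ) * (2*x)^j *
          ((1-γ^2)^j * (2-(1-γ^2))^(k-j) - (1-η))^2 := by
  have hγ2 : (γ:ℝ)^2 ≠ 0 := pow_ne_zero 2 hγ0.ne'
  set ε : ℝ := 1 - γ^2 with hε
  have key : ∀ j ∈ Finset.range (k+1),
      (k.choose j : ℝ) * (2*x)^j * ((1-γ^2)^j * (2-(1-γ^2))^(k-j) - (1-η))^2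
      = ((2*x*ε^2)^j * ((2-ε)^2)^(k-j) * (k.choose j)
        - 2*(1-η) * ((2*x*ε)^j * (2-ε)^(k-j) * (k.choose j)))
        + (1-η)^2 * ((2*x)^j * (1:ℝ)^(k-j) * (k.choose j)) := by
    intro j hj
    have h1 : (2*x*ε^2)^j = (2*x)^j * (ε^j)^2 := by
      rw [mul_pow, ← pow_mul, ← pow_mul, Nat.mul_comm]
    have h2 : ((2-ε)^2)^(k-j) = ((2-ε)^(k-j))^2 := by
      rw [← pow_mul, ← pow_mul, Nat.mul_comm]
    have h3 : (2*x*ε)^j = (2*x)^j * ε^j := mul_pow _ _ _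
    rw [h1, h2, h3, mul_pow 2 x, ← hε]
    ring
  rw [Finset.sum_congr rfl key]
  rw [Finset.sum_add_distrib, Finset.sum_sub_distrib, ← Finset.mul_sum, ← Finset.mul_sum,
    ← add_pow, ← add_pow, ← add_pow]
  have hη : η ^ (2*u0) * η ^ (-(2*u0)) = 1 := by
    rw [← Real.rpow_add hη0]; simp
  unfold ff
  have hrw : ∀ X : ℝ, η ^ (2*u0) * 2^(2*k) * γ^(2*k) * (η ^ (-(2*u0)) * X)
      = 2^(2*k) * γ^(2*k) * X := by
    intro X
    rw [show η ^ (2*u0) * 2^(2*k) * γ^(2*k) * (η ^ (-(2*u0)) * X)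
        = (η ^ (2*u0) * η ^ (-(2*u0))) * (2^(2*k) * γ^(2*k) * X) by ring, hη, one_mul]
  rw [hrw]
  have hA : (2:ℝ)^(2*k)*γ^(2*k)*((1/2+x)*((γ^2+(γ^2)⁻¹)/2)+1-(1/2+x))^k
      = (2*x*ε^2 + (2-ε)^2)^k := by
    rw [pow_mul, pow_mul, ← mul_pow, ← mul_pow]
    congr 1
    field_simp
    ring
  have hB : (2:ℝ)^(2*k)*γ^(2*k)*(((1/2+x)*(γ^2)⁻¹ + (1-(1/2+x)))/2)^k
      = (2*x*ε + (2-ε))^k := by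
    rw [pow_mul, pow_mul, ← mul_pow, ← mul_pow]
    congr 1
    field_simp
    ring
  have hC : (2:ℝ)^(2*k)*γ^(2*k)*((1/2+x)*(γ^2)⁻¹/2)^k = (2*x + 1)^k := by
    rw [pow_mul, pow_mul, ← mul_pow, ← mul_pow]
    congr 1
    field_simp
    ring
  linear_combination hA - 2*(1-η)*hB + (1-η)^2*hC

end
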